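/- There exist constants C > 0 and K > 0 such that for all integers k ≥ K and all degrees 1 ≤ p ≤ k-1, the proportion of binary sequences η ∈ {0,1}^k with exactly p ones whose primitive period under the cyclic shift is strictly less than k is at most C·(log k)/k. That is, #{η ∈ {0,1}^k : deg(η) = p, per(η) < k} / binom(k,p) ≤ C (log k)/k. -/

import Mathlib

/-- the cyclic shift on binary sequences of length `k`. -/
def cycShift (k : ℕ) (η : Fin k → Bool) : Fin k → Bool :=
  fun i => η ⟨(i.val + 1) % k, Nat.mod_lt _ i.pos⟩

/-- the primitive period of `η` under the cyclic shift. -/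
noncomputable def primPeriod (k : ℕ) (η : Fin k → Bool) : ℕ :=
  sInf {ℓ : ℕ | 1 ≤ ℓ ∧ (cycShift k)^[ℓ] η = η}

/-- the degree of `η`: the number of indices with `η i = true`. -/
def degree (k : ℕ) (η : Fin k → Bool) : ℕ :=
  (Finset.univ.filter fun i : Fin k => η i = true).card

namespace Stmt6Aux

open Finset

lemma shift_iter {k : ℕ} (ℓ : ℕ) (η : Fin k → Bool) (i : Fin k) :
    ((cycShift k)^[ℓ] η) i = η ⟨(i.val + ℓ) % k, Nat.mod_lt _ i.pos⟩ := by
  induction ℓ generalizing η with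
  | zero => simp [Nat.mod_eq_of_lt i.isLt]
  | succ n ih =>
      rw [Function.iterate_succ_apply, ih]
      show η _ = η _
      congr 1
      apply Fin.ext
      show ((i.val + n) % k + 1) % k = (i.val + (n + 1)) % k
      rw [Nat.mod_add_mod, Nat.add_assoc]

lemma shift_k_fix {k : ℕ} (η : Fin k → Bool) : (cycShift k)^[k] η = η := by
  funext i
  rw [shift_iter]
  congr 1
  apply Fin.ext
  show (i.val + k) % k = i.val
  rw [Nat.add_mod_right, Nat.mod_eq_of_lt i.isLt]

lemma primPeriod_spec {k : ℕ} (η : Fin k → Bool) (hk : 1 ≤ k) :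
    1 ≤ primPeriod k η ∧ (cycShift k)^[primPeriod k η] η = η := by
  have h : {ℓ : ℕ | 1 ≤ ℓ ∧ (cycShift k)^[ℓ] η = η}.Nonempty := ⟨k, hk, shift_k_fix η⟩
  exact Nat.sInf_mem h

lemma primPeriod_dvd {k : ℕ} (η : Fin k → Bool) (hk : 1 ≤ k) :
    primPeriod k η ∣ k := by
  obtain ⟨hd1, hfix⟩ := primPeriod_spec η hk
  set d := primPeriod k η with hd
  have hmul : (cycShift k)^[d * (k / d)] η = η := by
    rw [Function.iterate_mul]
    exact Function.iterate_fixed hfix _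
  have hmod : (cycShift k)^[k % d] η = η := by
    have h2 : (cycShift k)^[k % d + d * (k / d)] η = η := by
      rw [Nat.mod_add_div, shift_k_fix]
    rwa [Function.iterate_add_apply, hmul] at h2
  have : k % d = 0 := by
    by_contra h
    have h1 : 1 ≤ k % d := Nat.pos_of_ne_zero h
    have hle : d ≤ k % d := Nat.sInf_le ⟨h1, hmod⟩
    have hlt : k % d < d := Nat.mod_lt _ hd1
    omega
  exact Nat.dvd_of_mod_eq_zero this

lemma determined {k d : ℕ} (η : Fin k → Bool) (hd1 : 1 ≤ d) (hdk : d ≤ k)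
    (hfix : (cycShift k)^[d] η = η) :
    ∀ n : ℕ, ∀ hn : n < k, η ⟨n, hn⟩ = η ⟨n % d, lt_of_lt_of_le (Nat.mod_lt n hd1) hdk⟩ := by
  intro n
  induction n using Nat.strong_induction_on with
  | _ n ih =>
    intro hn
    by_cases h : n < d
    · congr 1
      exact Fin.ext (Nat.mod_eq_of_lt h).symm
    · push_neg at h
      have hnd : n - d < k := by omega
      have h1 : η ⟨n - d, hnd⟩ = η ⟨n, hn⟩ := by
        conv_lhs => rw [← hfix]
        rw [shift_iter]
        congr 1
        apply Fin.ext
        show (n - d + d) % k = n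
        rw [Nat.sub_add_cancel h, Nat.mod_eq_of_lt hn]
      have h2 := ih (n - d) (by omega) hnd
      rw [← h1, h2]
      congr 1
      apply Fin.ext
      show (n - d) % d = n % d
      rw [← Nat.mod_eq_sub_mod h]

lemma degree_eq {k d q : ℕ} (hq : d * q = k) (hd1 : 1 ≤ d)
    (ξ : Fin d → Bool) (η : Fin k → Bool)
    (hkey : ∀ i : Fin k, η i = ξ ⟨i.val % d, Nat.mod_lt _ hd1⟩) :
    degree k η = q * degree d ξ := by
  classical
  have hqk : q * d = k := by rw [mul_comm]; exact hq
  let e : Fin q × Fin d ≃ Fin k := finProdFinEquiv.trans (finCongr hqk)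
  have hval : ∀ x : Fin q × Fin d, ((e x : Fin k) : ℕ) % d = (x.2 : ℕ) := by
    intro x
    show ((x.2 : ℕ) + d * (x.1 : ℕ)) % d = (x.2 : ℕ)
    rw [Nat.add_mul_mod_self_left, Nat.mod_eq_of_lt x.2.isLt]
  have hcong : ∀ x : Fin q × Fin d, η (e x) = ξ x.2 := by
    intro x
    rw [hkey (e x)]
    congr 1
    exact Fin.ext (hval x)
  unfold degree
  have h1 : (univ.filter fun i : Fin k => η i = true).card
      = (univ.filter fun x : Fin q × Fin d => η (e x) = true).card := by
    rw [← Fintype.card_subtype, ← Fintype.card_subtype]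
    exact Fintype.card_congr ((e.subtypeEquiv (fun x => by rfl)).symm)
  rw [h1]
  have h2 : (univ.filter fun x : Fin q × Fin d => η (e x) = true)
      = univ ×ˢ (univ.filter fun j : Fin d => ξ j = true) := by
    ext x
    simp [Finset.mem_product, hcong x]
  rw [h2, Finset.card_product, card_univ, Fintype.card_fin]

lemma choose_mul_choose_le (a b c e : ℕ) :
    a.choose b * c.choose e ≤ (a + c).choose (b + e) := by
  rw [Nat.add_choose_eq]
  exact Finset.single_le_sum (f := fun ij : ℕ × ℕ => a.choose ij.1 * c.choose ij.2)
    (fun _ _ => Nat.zero_le _)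
    (show (b, e) ∈ _ from by simp)

lemma choose_pow_le (d m : ℕ) : ∀ q : ℕ, d.choose m ^ q ≤ (d * q).choose (m * q) := by
  intro q
  induction q with
  | zero => simp
  | succ n ih =>
      calc d.choose m ^ (n + 1) = d.choose m ^ n * d.choose m := by rw [pow_succ]
        _ ≤ (d * n).choose (m * n) * d.choose m := Nat.mul_le_mul_right _ ih
        _ ≤ (d * n + d).choose (m * n + m) := choose_mul_choose_le _ _ _ _
        _ = (d * (n + 1)).choose (m * (n + 1)) := by rw [Nat.mul_succ, Nat.mul_succ]

lemma le_choose_aux (d : ℕ) : ∀ m : ℕ, 1 ≤ m → m ≤ d / 2 → d ≤ d.choose m := by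
  intro m
  induction m with
  | zero => omega
  | succ n ih =>
      intro _ h2
      rcases Nat.eq_zero_or_pos n with h | h
      · subst h; simp [Nat.choose_one_right]
      · exact le_trans (ih h (by omega)) (Nat.choose_le_succ_of_lt_half_left (by omega))

lemma le_choose (d m : ℕ) (h1 : 1 ≤ m) (h2 : m + 1 ≤ d) : d ≤ d.choose m := by
  by_cases h : m ≤ d / 2
  · exact le_choose_aux d m h1 h
  · have hsymm : d.choose (d - m) = d.choose m := Nat.choose_symm (by omega)
    rw [← hsymm]
    exact le_choose_aux d (d - m) (by omega) (by omega)

lemma card_fix_le {k d p : ℕ} (hdvd : d ∣ k) (hdlt : d < k) (hk : 1 ≤ k)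
    (hp1 : 1 ≤ p) (hpk : p ≤ k - 1) :
    Nat.card {η : Fin k → Bool // degree k η = p ∧ (cycShift k)^[d] η = η}
      * (d * 2 ^ (k / d - 2)) ≤ k.choose p := by
  classical
  have hd1 : 1 ≤ d := by
    rcases Nat.eq_zero_or_pos d with h | h
    · subst h; simp at hdvd; omega
    · exact h
  have hdk : d ≤ k := le_of_lt hdlt
  set q := k / d with hqdef
  have hqd : d * q = k := Nat.mul_div_cancel' hdvd
  have hq2 : 2 ≤ q := by
    rcases Nat.lt_or_ge q 2 with h | h
    · interval_cases q <;> omega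
    · exact h
  -- restriction map
  set res : (Fin k → Bool) → (Fin d → Bool) :=
    fun η j => η ⟨j.val, lt_of_lt_of_le j.isLt hdk⟩ with hres
  have hkey : ∀ η : Fin k → Bool, (cycShift k)^[d] η = η →
      ∀ i : Fin k, η i = res η ⟨i.val % d, Nat.mod_lt _ hd1⟩ := by
    intro η hfix i
    have := determined η hd1 hdk hfix i.val i.isLt
    simpa using this
  -- injection into patterns of length d
  set T := {ξ : Fin d → Bool // q * degree d ξ = p} with hT
  have hinj : ∃ f : {η : Fin k → Bool // degree k η = p ∧ (cycShift k)^[d] η = η} → T,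
      Function.Injective f := by
    refine ⟨fun η => ⟨res η.1, ?_⟩, ?_⟩
    · have := degree_eq hqd hd1 (res η.1) η.1 (hkey η.1 η.2.2)
      rw [← this]; exact η.2.1
    · intro a b hab
      have hres_eq : res a.1 = res b.1 := congrArg Subtype.val hab
      apply Subtype.ext
      funext i
      rw [hkey a.1 a.2.2 i, hkey b.1 b.2.2 i, hres_eq]
  obtain ⟨f, hf⟩ := hinj
  have hcard1 : Nat.card {η : Fin k → Bool // degree k η = p ∧ (cycShift k)^[d] η = η}
      ≤ Nat.card T := Nat.card_le_card_of_injective f hf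
  rcases isEmpty_or_nonempty T with hE | hNE
  · have hT0 : Nat.card T = 0 := @Nat.card_of_isEmpty _ hE
    rw [hT0] at hcard1
    have h0 : Nat.card {η : Fin k → Bool // degree k η = p ∧ (cycShift k)^[d] η = η} = 0 := by
      omega
    rw [h0, Nat.zero_mul]
    exact Nat.zero_le _
  · obtain ⟨⟨ξ0, hξ0⟩⟩ := hNE
    set m := degree d ξ0 with hm
    have hqm : q * m = p := hξ0
    have hm1 : 1 ≤ m := by
      rcases Nat.eq_zero_or_pos m with h | h
      · rw [h, Nat.mul_zero] at hqm; omega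
      · exact h
    have hmd : m + 1 ≤ d := by
      have : q * m < q * d := by
        rw [hqm, Nat.mul_comm q d, hqd]; omega
      have := Nat.lt_of_mul_lt_mul_left this
      omega
    -- T injects into size-m subsets
    have hcard2 : Nat.card T ≤ d.choose m := by
      have hmem : ∀ ξ : T,
          Finset.univ.filter (fun j => ξ.1 j = true) ∈ Finset.powersetCard m Finset.univ := by
        intro ξ
        rw [Finset.mem_powersetCard]
        refine ⟨Finset.subset_univ _, ?_⟩
        have hdegξ : q * degree d ξ.1 = p := ξ.2
        have : degree d ξ.1 = m := by
          have h9 : q * degree d ξ.1 = q * m := by rw [hdegξ, hqm]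
          exact Nat.eq_of_mul_eq_mul_left (by omega) h9
        exact this
      let g : T → {s : Finset (Fin d) // s ∈ Finset.powersetCard m Finset.univ} :=
        fun ξ => ⟨Finset.univ.filter (fun j => ξ.1 j = true), hmem ξ⟩
      have hg : Function.Injective g := by
        intro a b hab
        have h2 : (Finset.univ.filter (fun j => a.1 j = true))
            = (Finset.univ.filter (fun j => b.1 j = true)) := congrArg Subtype.val hab
        apply Subtype.ext
        funext j
        have := Finset.ext_iff.mp h2 j
        simp only [Finset.mem_filter, Finset.mem_univ, true_and] at this
        cases haj : a.1 j <;> cases hbj : b.1 j <;> simp_all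
      calc Nat.card T ≤ Nat.card {s : Finset (Fin d) // s ∈ Finset.powersetCard m Finset.univ} :=
            Nat.card_le_card_of_injective g hg
        _ = (Finset.powersetCard m (Finset.univ : Finset (Fin d))).card := by
            rw [Nat.card_eq_fintype_card, Fintype.card_coe]
        _ = d.choose m := by rw [Finset.card_powersetCard, card_univ, Fintype.card_fin]
    have hchoose_ge_d : d ≤ d.choose m := le_choose d m hm1 hmd
    have hchoose_ge_2 : 2 ≤ d.choose m := le_trans (by omega) hchoose_ge_d
    have hpow : d * 2 ^ (q - 2) ≤ d.choose m ^ (q - 1) := by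
      have : d.choose m ^ (q - 1) = d.choose m * d.choose m ^ (q - 2) := by
        rw [← pow_succ']
        congr 1
        omega
      rw [this]
      exact Nat.mul_le_mul hchoose_ge_d (Nat.pow_le_pow_left hchoose_ge_2 _)
    calc Nat.card {η : Fin k → Bool // degree k η = p ∧ (cycShift k)^[d] η = η}
          * (d * 2 ^ (q - 2))
        ≤ d.choose m * (d.choose m ^ (q - 1)) :=
          Nat.mul_le_mul (le_trans hcard1 hcard2) hpow
      _ = d.choose m ^ q := by rw [← pow_succ']; congr 1; omega
      _ ≤ (d * q).choose (m * q) := choose_pow_le d m q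
      _ = k.choose p := by rw [hqd, Nat.mul_comm m q, hqm]

lemma nat_le_pow32 (q : ℕ) : (q : ℝ) ≤ 2 * (3 / 2) ^ q := by
  induction q with
  | zero => norm_num
  | succ n ih =>
      have h1 : (1 : ℝ) ≤ (3 / 2) ^ n := one_le_pow₀ (by norm_num)
      push_cast
      rw [pow_succ]
      nlinarith

lemma geom_sum_le4 (n : ℕ) : ∑ q ∈ Finset.range n, ((3 : ℝ) / 4) ^ q ≤ 4 := by
  have h := geom_sum_eq (by norm_num : (3 : ℝ) / 4 ≠ 1) n
  rw [h]
  have h2 : (0 : ℝ) ≤ (3 / 4 : ℝ) ^ n := by positivity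
  have h3 : ((3:ℝ)/4) ^ n ≤ 1 := pow_le_one₀ (by norm_num) (by norm_num)
  rw [div_le_iff_of_neg (by norm_num : (3:ℝ)/4 - 1 < 0)]
  nlinarith

end Stmt6Aux

open Stmt6Aux Finset in
theorem stmt6 :
    ∃ C > (0 : ℝ), ∃ K : ℕ, ∀ k : ℕ, K ≤ k → ∀ p : ℕ, 1 ≤ p → p ≤ k - 1 →
      (Nat.card {η : Fin k → Bool // degree k η = p ∧ primPeriod k η < k} : ℝ)
        ≤ C * Real.log k / k * (k.choose p) := by
  classical
  refine ⟨32, by norm_num, 3, ?_⟩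
  intro k hk3 p hp1 hpk
  have hk1 : 1 ≤ k := by omega
  have hkR : (0 : ℝ) < k := by positivity
  set F : Finset (Fin k → Bool) :=
    univ.filter (fun η => degree k η = p ∧ primPeriod k η < k) with hF
  have hcardF : (Nat.card {η : Fin k → Bool // degree k η = p ∧ primPeriod k η < k}) = F.card := by
    rw [Nat.card_eq_fintype_card, Fintype.card_subtype]
  set g : ℕ → Finset (Fin k → Bool) :=
    fun d => univ.filter (fun η => degree k η = p ∧ (cycShift k)^[d] η = η) with hg
  have hsubset : F ⊆ (k.properDivisors).biUnion g := by
    intro η hη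
    rw [hF, Finset.mem_filter] at hη
    rw [Finset.mem_biUnion]
    obtain ⟨hdeg, hper⟩ := hη.2
    refine ⟨primPeriod k η, ?_, ?_⟩
    · exact Nat.mem_properDivisors.mpr ⟨primPeriod_dvd η hk1, hper⟩
    · rw [hg, Finset.mem_filter]
      exact ⟨Finset.mem_univ _, hdeg, (primPeriod_spec η hk1).2⟩
  have hcard_le : F.card ≤ ∑ d ∈ k.properDivisors, (g d).card :=
    le_trans (Finset.card_le_card hsubset) (Finset.card_biUnion_le)
  -- per-divisor bound in ℝ
  have hterm : ∀ d ∈ k.properDivisors,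
      ((g d).card : ℝ) ≤ (k.choose p : ℝ) / k * (8 * (3 / 4) ^ (k / d)) := by
    intro d hd
    rw [Nat.mem_properDivisors] at hd
    obtain ⟨hdvd, hdlt⟩ := hd
    have hd1 : 1 ≤ d := by
      rcases Nat.eq_zero_or_pos d with h | h
      · subst h; simp at hdvd; omega
      · exact h
    set q := k / d with hqdef
    have hqd : d * q = k := Nat.mul_div_cancel' hdvd
    have hq2 : 2 ≤ q := by
      rcases Nat.lt_or_ge q 2 with h | h
      · interval_cases q <;> omega
      · exact h
    have hnat : (g d).card * (d * 2 ^ (q - 2)) ≤ k.choose p := by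
      have hconv : (g d).card
          = Nat.card {η : Fin k → Bool // degree k η = p ∧ (cycShift k)^[d] η = η} := by
        rw [Nat.card_eq_fintype_card, Fintype.card_subtype]
      rw [hconv]
      exact card_fix_le hdvd hdlt hk1 hp1 hpk
    have hR : ((g d).card : ℝ) * (d * 2 ^ (q - 2)) ≤ (k.choose p : ℝ) := by
      exact_mod_cast hnat
    have hdpos : (0 : ℝ) < d := by positivity
    have hident : 8 * ((3 : ℝ) / 4) ^ q * (d * 2 ^ (q - 2)) = 2 * d * (3 / 2) ^ q := by
      have h2q : (2 : ℝ) ^ (q - 2) * 4 = 2 ^ q := by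
        rw [show (4 : ℝ) = 2 ^ 2 by norm_num, ← pow_add]
        congr 1
        omega
      have h34 : ((3 : ℝ) / 4) ^ q * 2 ^ q = (3 / 2) ^ q := by
        rw [← mul_pow]; norm_num
      calc 8 * ((3 : ℝ) / 4) ^ q * (d * 2 ^ (q - 2))
          = 2 * d * (((3 : ℝ) / 4) ^ q * (2 ^ (q - 2) * 4)) := by ring
        _ = 2 * d * (3 / 2) ^ q := by rw [h2q, h34]
    have hkle : (k : ℝ) ≤ 8 * ((3 : ℝ) / 4) ^ q * (d * 2 ^ (q - 2)) := by
      rw [hident]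
      have : (k : ℝ) = d * q := by exact_mod_cast hqd.symm
      rw [this]
      have := nat_le_pow32 q
      nlinarith
    -- combine
    have hmain : ((g d).card : ℝ) * k ≤ 8 * ((3 : ℝ) / 4) ^ q * (k.choose p : ℝ) := by
      calc ((g d).card : ℝ) * k ≤ ((g d).card : ℝ) * (8 * ((3 : ℝ) / 4) ^ q * (d * 2 ^ (q - 2))) := by
            apply mul_le_mul_of_nonneg_left hkle (by positivity)
        _ = 8 * ((3 : ℝ) / 4) ^ q * (((g d).card : ℝ) * (d * 2 ^ (q - 2))) := by ring
        _ ≤ 8 * ((3 : ℝ) / 4) ^ q * (k.choose p : ℝ) := by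
            apply mul_le_mul_of_nonneg_left hR (by positivity)
    rw [div_mul_eq_mul_div, le_div_iff₀ hkR]
    calc ((g d).card : ℝ) * k ≤ 8 * ((3 : ℝ) / 4) ^ q * (k.choose p : ℝ) := hmain
      _ = (k.choose p : ℝ) * (8 * (3 / 4) ^ q) := by ring
  -- sum up
  have hsum : ∑ d ∈ k.properDivisors, ((k.choose p : ℝ) / k * (8 * (3 / 4) ^ (k / d)))
      ≤ (k.choose p : ℝ) / k * 32 := by
    rw [← Finset.mul_sum]
    have hinj : Set.InjOn (fun d => k / d) (k.properDivisors : Set ℕ) := by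
      intro a ha b hb hab
      rw [Finset.mem_coe, Nat.mem_properDivisors] at ha hb
      have h1 := Nat.div_div_self ha.1 (by omega)
      have h2 := Nat.div_div_self hb.1 (by omega)
      simp only at hab
      rw [← h1, ← h2, hab]
    have hsum1 : ∑ d ∈ k.properDivisors, (8 * ((3 : ℝ) / 4) ^ (k / d))
        = ∑ q ∈ k.properDivisors.image (fun d => k / d), (8 * ((3 : ℝ) / 4) ^ q) := by
      rw [Finset.sum_image (fun a ha b hb => hinj ha hb)]
    have hsub : k.properDivisors.image (fun d => k / d) ⊆ Finset.range (k + 1) := by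
      intro q hq
      rw [Finset.mem_image] at hq
      obtain ⟨d, _, rfl⟩ := hq
      rw [Finset.mem_range]
      exact Nat.lt_succ_of_le (Nat.div_le_self k d)
    have hsum2 : ∑ q ∈ k.properDivisors.image (fun d => k / d), (8 * ((3 : ℝ) / 4) ^ q)
        ≤ ∑ q ∈ Finset.range (k + 1), (8 * ((3 : ℝ) / 4) ^ q) :=
      Finset.sum_le_sum_of_subset_of_nonneg hsub (fun _ _ _ => by positivity)
    have hsum3 : ∑ q ∈ Finset.range (k + 1), (8 * ((3 : ℝ) / 4) ^ q) ≤ 32 := by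
      rw [← Finset.mul_sum]
      have := geom_sum_le4 (k + 1)
      nlinarith
    have hchoose_nonneg : (0 : ℝ) ≤ (k.choose p : ℝ) / k := by positivity
    have hfin : ∑ d ∈ k.properDivisors, (8 * ((3 : ℝ) / 4) ^ (k / d)) ≤ 32 := by
      rw [hsum1]
      exact le_trans hsum2 hsum3
    exact mul_le_mul_of_nonneg_left hfin hchoose_nonneg
  have hlog : 1 ≤ Real.log k := by
    rw [Real.le_log_iff_exp_le hkR]
    have h3 : (3 : ℝ) ≤ k := by exact_mod_cast hk3
    have := Real.exp_one_lt_d9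
    linarith
  calc (Nat.card {η : Fin k → Bool // degree k η = p ∧ primPeriod k η < k} : ℝ)
      = (F.card : ℝ) := by rw [hcardF]
    _ ≤ ∑ d ∈ k.properDivisors, ((g d).card : ℝ) := by
        exact_mod_cast Nat.cast_le.mpr hcard_le
    _ ≤ ∑ d ∈ k.properDivisors, ((k.choose p : ℝ) / k * (8 * (3 / 4) ^ (k / d))) :=
        Finset.sum_le_sum hterm
    _ ≤ (k.choose p : ℝ) / k * 32 := hsum
    _ ≤ 32 * Real.log k / k * (k.choose p) := by
        rw [div_mul_eq_mul_div, div_mul_eq_mul_div, div_le_div_iff₀ hkR hkR]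
        have hcnn : (0 : ℝ) ≤ (k.choose p : ℝ) := by positivity
        have key : (0 : ℝ) ≤ (Real.log k - 1) * (k.choose p : ℝ) * k :=
          mul_nonneg (mul_nonneg (by linarith) hcnn) hkR.le
        nlinarith [key]
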